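/- Let d ≥ 1, a > 0, b > 0. Let f, h : ℝ^d → ℝ be Lipschitz continuous with constants L_f and L_h respectively, and let Q̃ = {(x,s,t) ∈ ℝ^d × ℝ × ℝ : h(x) ≤ a s, f(x) + a s ≤ b t}. Set C̃_f = √(b² + a² + L_f²), C̃_h = √(a² + L_h²), μ = min{a/C̃_h, b/C̃_f}, λ = 2 + a/b, and fix c > 1 and κ = (c−1)/(λ+μ). Let q ∈ ℝ^{d+2}, let p* ∈ Q̃ with ‖p* − q‖ ≤ r_loc for some r_loc > 0, set Δs = Δt = κ·r_loc and p̄ = p* + (0, Δs, (a/b)Δs + Δt) ∈ ℝ^d × ℝ × ℝ. Then the closed Euclidean ball of radius κ·μ·r_loc centered at p̄ is contained in Q̃ ∩ B(q, c·r_loc), where B(q, c·r_loc) is the closed Euclidean ball of radius c·r_loc centered at q. -/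

import Mathlib

/-- The Euclidean norm of a point of `ℝ^d × ℝ × ℝ ≅ ℝ^{d+2}`. -/
noncomputable def enorm3 {d : ℕ} (p : EuclideanSpace ℝ (Fin d) × ℝ × ℝ) : ℝ :=
  Real.sqrt (‖p.1‖ ^ 2 + p.2.1 ^ 2 + p.2.2 ^ 2)

noncomputable def toL2 {d : ℕ} (p : EuclideanSpace ℝ (Fin d) × ℝ × ℝ) :
    WithLp 2 (EuclideanSpace ℝ (Fin d) × WithLp 2 (ℝ × ℝ)) :=
  WithLp.toLp 2 (p.1, WithLp.toLp 2 (p.2.1, p.2.2))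

lemma enorm3_eq {d : ℕ} (p : EuclideanSpace ℝ (Fin d) × ℝ × ℝ) :
    enorm3 p = ‖toL2 p‖ := by
  have h2 : ‖(toL2 p).snd‖ ^ 2 = p.2.1 ^ 2 + p.2.2 ^ 2 := by
    rw [WithLp.prod_norm_sq_eq_of_L2]
    simp [toL2, Real.norm_eq_abs, sq_abs]
  have h1 : (toL2 p).fst = p.1 := rfl
  rw [enorm3, WithLp.prod_norm_eq_of_L2, h2, h1, add_assoc]

lemma enorm3_add_le {d : ℕ} (x y : EuclideanSpace ℝ (Fin d) × ℝ × ℝ) :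
    enorm3 (x + y) ≤ enorm3 x + enorm3 y := by
  have : toL2 (x + y) = toL2 x + toL2 y := rfl
  rw [enorm3_eq, enorm3_eq, enorm3_eq, this]; exact norm_add_le _ _

lemma cs3 (u v w X Y Z B : ℝ) (hB : 0 ≤ B) (h : Real.sqrt (X ^ 2 + Y ^ 2 + Z ^ 2) ≤ B) :
    u * X + v * Y + w * Z ≤ Real.sqrt (u ^ 2 + v ^ 2 + w ^ 2) * B := by
  have hS : X ^ 2 + Y ^ 2 + Z ^ 2 ≤ B ^ 2 := by
    have := Real.sq_sqrt (by positivity : (0:ℝ) ≤ X ^ 2 + Y ^ 2 + Z ^ 2)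
    nlinarith [Real.sqrt_nonneg (X ^ 2 + Y ^ 2 + Z ^ 2)]
  have hU : 0 ≤ Real.sqrt (u ^ 2 + v ^ 2 + w ^ 2) := Real.sqrt_nonneg _
  have hUsq := Real.sq_sqrt (by positivity : (0:ℝ) ≤ u ^ 2 + v ^ 2 + w ^ 2)
  nlinarith [sq_nonneg (u * Y - v * X), sq_nonneg (u * Z - w * X), sq_nonneg (v * Z - w * Y),
    sq_nonneg (u * X + v * Y + w * Z - Real.sqrt (u ^ 2 + v ^ 2 + w ^ 2) * B),
    mul_nonneg hU hB]


set_option maxHeartbeats 1600000 in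
/-- Inscribed-ball construction for the local set: with
`Q̃ = {(x,s,t) : h x ≤ a s, f x + a s ≤ b t}`, `μ = min(a/C̃_h, b/C̃_f)`, `λ = 2 + a/b`,
`κ = (c-1)/(λ+μ)`, `p* ∈ Q̃` with `‖p* - q‖ ≤ r_loc`, and
`p̄ = p* + (0, Δs, (a/b)Δs + Δt)` with `Δs = Δt = κ r_loc`, the closed ball of radius
`κ μ r_loc` centered at `p̄` is contained in `Q̃ ∩ B(q, c r_loc)`. -/
theorem stmt_17 {d : ℕ} (hd : 1 ≤ d) (a b Lf Lh c rloc : ℝ)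
    (ha : 0 < a) (hb : 0 < b) (hLf : 0 ≤ Lf) (hLh : 0 ≤ Lh) (hc : 1 < c) (hr : 0 < rloc)
    (f h : EuclideanSpace ℝ (Fin d) → ℝ)
    (hfL : ∀ u v, |f u - f v| ≤ Lf * ‖u - v‖)
    (hhL : ∀ u v, |h u - h v| ≤ Lh * ‖u - v‖)
    (mu lambda kappa : ℝ)
    (hmu : mu = min (a / Real.sqrt (a ^ 2 + Lh ^ 2)) (b / Real.sqrt (b ^ 2 + a ^ 2 + Lf ^ 2)))
    (hlambda : lambda = 2 + a / b)
    (hkappa : kappa = (c - 1) / (lambda + mu))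
    (q ps : EuclideanSpace ℝ (Fin d) × ℝ × ℝ)
    (hps : h ps.1 ≤ a * ps.2.1 ∧ f ps.1 + a * ps.2.1 ≤ b * ps.2.2)
    (hpq : enorm3 (ps - q) ≤ rloc) :
    ∀ p : EuclideanSpace ℝ (Fin d) × ℝ × ℝ,
      enorm3 (p - (ps + ((0 : EuclideanSpace ℝ (Fin d)), kappa * rloc,
          (a / b) * (kappa * rloc) + kappa * rloc))) ≤ kappa * mu * rloc →
      (h p.1 ≤ a * p.2.1 ∧ f p.1 + a * p.2.1 ≤ b * p.2.2) ∧ enorm3 (p - q) ≤ c * rloc := by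
  have hCh : (0:ℝ) < Real.sqrt (a ^ 2 + Lh ^ 2) := Real.sqrt_pos.mpr (by positivity)
  have hCf : (0:ℝ) < Real.sqrt (b ^ 2 + a ^ 2 + Lf ^ 2) := Real.sqrt_pos.mpr (by positivity)
  have hmu_pos : 0 < mu := by
    rw [hmu]; exact lt_min (by positivity) (by positivity)
  have hlam_pos : 0 < lambda := by rw [hlambda]; positivity
  have hk_pos : 0 < kappa := by rw [hkappa]; exact div_pos (by linarith) (by linarith)
  have hmuh : mu * Real.sqrt (a ^ 2 + Lh ^ 2) ≤ a := by
    have : mu ≤ a / Real.sqrt (a ^ 2 + Lh ^ 2) := hmu ▸ min_le_left _ _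
    exact (le_div_iff₀ hCh).mp this
  have hmuf : mu * Real.sqrt (b ^ 2 + a ^ 2 + Lf ^ 2) ≤ b := by
    have : mu ≤ b / Real.sqrt (b ^ 2 + a ^ 2 + Lf ^ 2) := hmu ▸ min_le_right _ _
    exact (le_div_iff₀ hCf).mp this
  intro p hp
  set Δ : ℝ := kappa * rloc with hΔdef
  have hΔ : 0 < Δ := by positivity
  have hB : (0:ℝ) ≤ kappa * mu * rloc := by positivity
  unfold enorm3 at hp
  simp only [Prod.fst_sub, Prod.fst_add, Prod.snd_sub, Prod.snd_add, add_zero] at hp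
  set X : ℝ := ‖p.1 - ps.1‖ with hXdef
  set Y : ℝ := p.2.1 - (ps.2.1 + Δ) with hYdef
  set Z : ℝ := p.2.2 - (ps.2.2 + ((a / b) * Δ + Δ)) with hZdef
  have hpY : p.2.1 = ps.2.1 + Δ + Y := by rw [hYdef]; ring
  have hpZ : p.2.2 = ps.2.2 + (a / b) * Δ + Δ + Z := by rw [hZdef]; ring
  have hab : b * (a / b) = a := by field_simp
  -- membership in Q̃
  have claim1 : h p.1 ≤ a * p.2.1 := by
    have h1 : h p.1 - h ps.1 ≤ Lh * X := le_trans (le_abs_self _) (hhL p.1 ps.1)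
    have hcs := cs3 Lh (-a) 0 X Y Z (kappa * mu * rloc) hB hp
    have hsq : Real.sqrt (Lh ^ 2 + (-a) ^ 2 + 0 ^ 2) = Real.sqrt (a ^ 2 + Lh ^ 2) := by
      congr 1; ring
    rw [hsq] at hcs
    have hbound : Real.sqrt (a ^ 2 + Lh ^ 2) * (kappa * mu * rloc) ≤ a * Δ := by
      rw [hΔdef]; nlinarith [hCh.le, mul_pos hk_pos hr, hmuh]
    rw [hpY]
    linarith [h1, hps.1, hcs, hbound, hΔdef]
  have claim2 : f p.1 + a * p.2.1 ≤ b * p.2.2 := by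
    have h1 : f p.1 - f ps.1 ≤ Lf * X := le_trans (le_abs_self _) (hfL p.1 ps.1)
    have hcs := cs3 Lf a (-b) X Y Z (kappa * mu * rloc) hB hp
    have hsq : Real.sqrt (Lf ^ 2 + a ^ 2 + (-b) ^ 2) = Real.sqrt (b ^ 2 + a ^ 2 + Lf ^ 2) := by
      congr 1; ring
    rw [hsq] at hcs
    have hbound : Real.sqrt (b ^ 2 + a ^ 2 + Lf ^ 2) * (kappa * mu * rloc) ≤ b * Δ := by
      rw [hΔdef]; nlinarith [hCf.le, mul_pos hk_pos hr, hmuf]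
    rw [hpY, hpZ]
    have hexp : b * (ps.2.2 + a / b * Δ + Δ + Z) =
        b * ps.2.2 + a * Δ + b * Δ + b * Z := by field_simp
    rw [hexp]
    linarith [h1, hps.2, hcs, hbound]
  refine ⟨⟨claim1, claim2⟩, ?_⟩
  -- distance bound
  set v : EuclideanSpace ℝ (Fin d) × ℝ × ℝ :=
    ((0 : EuclideanSpace ℝ (Fin d)), Δ, (a / b) * Δ + Δ) with hvdef
  have hsplit : p - q = (p - (ps + v)) + (v + (ps - q)) := by abel
  have ht1 : enorm3 (p - q) ≤ enorm3 (p - (ps + v)) + (enorm3 v + enorm3 (ps - q)) := by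
    rw [hsplit]
    exact le_trans (enorm3_add_le _ _) (by gcongr; exact enorm3_add_le _ _)
  have hv : enorm3 v ≤ lambda * Δ := by
    have h0 : ‖(0 : EuclideanSpace ℝ (Fin d))‖ = 0 := norm_zero
    rw [enorm3]
    have hS : ‖v.1‖ ^ 2 + v.2.1 ^ 2 + v.2.2 ^ 2 ≤ (lambda * Δ) ^ 2 := by
      simp only [hvdef, h0]
      rw [hlambda]
      have hab' : 0 < a / b := by positivity
      nlinarith [mul_pos hab' hΔ]
    calc Real.sqrt (‖v.1‖ ^ 2 + v.2.1 ^ 2 + v.2.2 ^ 2) ≤ Real.sqrt ((lambda * Δ) ^ 2) :=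
          Real.sqrt_le_sqrt hS
      _ = lambda * Δ := Real.sqrt_sq (by positivity)
  have hpv : enorm3 (p - (ps + v)) ≤ kappa * mu * rloc := by
    rw [enorm3]
    simp only [Prod.fst_sub, Prod.fst_add, Prod.snd_sub, Prod.snd_add, hvdef, add_zero]
    exact hp
  have hne : lambda + mu ≠ 0 := ne_of_gt (by linarith)
  have hlm : (lambda + mu) * kappa = c - 1 := by
    rw [hkappa]; field_simp
  have : enorm3 (p - q) ≤ kappa * mu * rloc + (lambda * Δ + rloc) := by
    calc enorm3 (p - q) ≤ enorm3 (p - (ps + v)) + (enorm3 v + enorm3 (ps - q)) := ht1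
      _ ≤ kappa * mu * rloc + (lambda * Δ + rloc) := by gcongr
  have hlm' : (lambda + mu) * kappa * rloc = (c - 1) * rloc := by rw [hlm]
  rw [hΔdef] at this
  linarith [this, hlm']
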